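/- Let f : ℝ^M → ℝ be differentiable, let u' ∈ ℝ^M, let B ∈ ℝ^{M×M} be symmetric positive semidefinite, and define q(u) = f(u') + ⟨∇f(u'), u − u'⟩ + (1/2)(u − u')ᵀB(u − u'). Suppose q(u) ≥ f(u) for all u, and let u⁺ be a minimizer of q satisfying B(u⁺ − u') + ∇f(u') = 0. Then f(u') − f(u⁺) ≥ (1/2)(u⁺ − u')ᵀB(u⁺ − u'). In particular, if vᵀBv ≥ η‖v‖² for all v and some η > 0, then f(u') − f(u⁺) ≥ (η/2)‖u⁺ − u'‖². -/

import Mathlib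

open Matrix

theorem stmt19 (M : ℕ) (f : EuclideanSpace ℝ (Fin M) → ℝ)
    (hdiff : Differentiable ℝ f)
    (u' : EuclideanSpace ℝ (Fin M))
    (B : Matrix (Fin M) (Fin M) ℝ) (hsymm : B.IsSymm)
    (hpsd : ∀ v : Fin M → ℝ, 0 ≤ v ⬝ᵥ B.mulVec v)
    (q : EuclideanSpace ℝ (Fin M) → ℝ)
    (hq : ∀ u, q u = f u' + inner ℝ (gradient f u') (u - u')
        + (1 / 2) * ((u - u') ⬝ᵥ B.mulVec (u - u' : EuclideanSpace ℝ (Fin M))))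
    (hmaj : ∀ u, f u ≤ q u)
    (uplus : EuclideanSpace ℝ (Fin M))
    (hmin : ∀ u, q uplus ≤ q u)
    (hcrit : (fun i => B.mulVec (uplus - u' : EuclideanSpace ℝ (Fin M)) i
        + gradient f u' i) = fun _ => 0) :
    (1 / 2) * ((uplus - u') ⬝ᵥ B.mulVec (uplus - u' : EuclideanSpace ℝ (Fin M)))
        ≤ f u' - f uplus ∧
      ∀ η : ℝ, 0 < η →
        (∀ v : EuclideanSpace ℝ (Fin M), η * ‖v‖ ^ 2 ≤ v ⬝ᵥ B.mulVec v) →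
          η / 2 * ‖uplus - u'‖ ^ 2 ≤ f u' - f uplus := by
  set d : EuclideanSpace ℝ (Fin M) := uplus - u' with hd
  have hgrad : ∀ i, gradient f u' i = - B.mulVec (d : Fin M → ℝ) i := by
    intro i
    have := congrFun hcrit i
    simp only at this
    linarith
  have hinner : (inner ℝ (gradient f u') d : ℝ)
      = - ((d : Fin M → ℝ) ⬝ᵥ B.mulVec (d : Fin M → ℝ)) := by
    rw [PiLp.inner_apply]
    rw [dotProduct_comm]
    simp only [dotProduct, RCLike.inner_apply, conj_trivial, ← Finset.sum_neg_distrib]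
    apply Finset.sum_congr rfl
    intro i _
    rw [hgrad i]
    ring
  have hqu : q uplus = f u' - (1 / 2) * ((d : Fin M → ℝ) ⬝ᵥ B.mulVec (d : Fin M → ℝ)) := by
    rw [hq uplus, ← hd, hinner]; ring
  have h1 : (1 / 2) * ((d : Fin M → ℝ) ⬝ᵥ B.mulVec (d : Fin M → ℝ)) ≤ f u' - f uplus := by
    have := hmaj uplus
    rw [hqu] at this
    linarith
  refine ⟨h1, fun η hη hB => ?_⟩
  have := hB d
  nlinarith [h1]
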